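/- Let G be a finite simple graph and let S and I be sets of edges of G, each of which is acyclic (forms a forest). Then the number of edges in I whose two endpoints lie in the same connected component of the spanning subgraph (V(G), S) is at most |S|. -/

import Mathlib

open Finset SimpleGraph

section Aux

variable {V : Type*}

private lemma myAcyclic_of_le {G H : SimpleGraph V} (hle : G ≤ H) (h : H.IsAcyclic) :
    G.IsAcyclic :=
  fun _ c hc => h (c.mapLe hle) (hc.mapLe hle)

private lemma myWalk_deleteEdges_cases {H : SimpleGraph V} (u v : V) {x y : V}
    (p : H.Walk x y) :
    (H.deleteEdges {s(u, v)}).Reachable x y ∨ (H.deleteEdges {s(u, v)}).Reachable x u ∨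
      (H.deleteEdges {s(u, v)}).Reachable x v := by
  induction p with
  | nil => exact Or.inl (Reachable.refl _)
  | @cons a b c hab p ih =>
    by_cases he : s(a, b) = s(u, v)
    · rw [Sym2.eq_iff] at he
      rcases he with ⟨rfl, rfl⟩ | ⟨rfl, rfl⟩
      · exact Or.inr (Or.inl (Reachable.refl _))
      · exact Or.inr (Or.inr (Reachable.refl _))
    · have hadj : (H.deleteEdges {s(u, v)}).Adj a b := by
        rw [SimpleGraph.deleteEdges_adj]
        exact ⟨hab, by simpa using he⟩
      rcases ih with h | h | h
      · exact Or.inl (hadj.reachable.trans h)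
      · exact Or.inr (Or.inl (hadj.reachable.trans h))
      · exact Or.inr (Or.inr (hadj.reachable.trans h))

private lemma myReachable_delete {H : SimpleGraph V} {u v x y : V}
    (hxy : H.Reachable x y) (hx : ¬ (H.deleteEdges {s(u, v)}).Reachable x v)
    (hy : ¬ (H.deleteEdges {s(u, v)}).Reachable y v) :
    (H.deleteEdges {s(u, v)}).Reachable x y := by
  obtain ⟨p⟩ := hxy
  rcases myWalk_deleteEdges_cases u v p with h | h | h
  · exact h
  · rcases myWalk_deleteEdges_cases u v p.reverse with h' | h' | h'
    · exact h'.symm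
    · exact h.trans h'.symm
    · exact absurd h' hy
  · exact absurd h hx

/-- The natural map from components of a smaller graph to a bigger graph. -/
private def myPhi {H : SimpleGraph V} (s : Set (Sym2 V)) :
    (H.deleteEdges s).ConnectedComponent → H.ConnectedComponent :=
  ConnectedComponent.lift (fun w => H.connectedComponentMk w)
    (fun _ _ p _ => ConnectedComponent.sound (p.mapLe (SimpleGraph.deleteEdges_le s)).reachable)

private lemma myCC_card_deleteEdges_le [Finite V] {H : SimpleGraph V} (u v : V) :
    Nat.card (H.deleteEdges {s(u, v)}).ConnectedComponent ≤
      Nat.card H.ConnectedComponent + 1 := by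
  classical
  set H' := H.deleteEdges {s(u, v)} with hH'
  let ψ : H'.ConnectedComponent → Option H.ConnectedComponent := fun c =>
    if c = H'.connectedComponentMk v then none else some (myPhi _ c)
  have hinj : Function.Injective ψ := by
    intro c₁ c₂ h
    obtain ⟨x, rfl⟩ := c₁.exists_rep
    obtain ⟨y, rfl⟩ := c₂.exists_rep
    simp only [ψ] at h
    by_cases h₁ : Quot.mk _ x = H'.connectedComponentMk v
    · by_cases h₂ : Quot.mk _ y = H'.connectedComponentMk v
      · exact h₁.trans h₂.symm
      · simp [h₁, h₂] at h
        exact absurd h h₂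
    · by_cases h₂ : Quot.mk _ y = H'.connectedComponentMk v
      · simp [h₁, h₂] at h
        exact absurd h h₁
      · have h := (if_neg h₁).symm.trans (h.trans (if_neg h₂))
        have hxy : H.Reachable x y :=
          ConnectedComponent.exact (Option.some_injective _ h)
        have hx : ¬ H'.Reachable x v := fun hr => h₁ (ConnectedComponent.sound hr)
        have hy : ¬ H'.Reachable y v := fun hr => h₂ (ConnectedComponent.sound hr)
        exact ConnectedComponent.sound (myReachable_delete hxy hx hy)
  haveI : Finite H.ConnectedComponent :=
    Finite.of_surjective H.connectedComponentMk (fun c => c.exists_rep)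
  haveI : Fintype H.ConnectedComponent := Fintype.ofFinite _
  calc Nat.card H'.ConnectedComponent ≤ Nat.card (Option H.ConnectedComponent) :=
        Nat.card_le_card_of_injective ψ hinj
    _ = Nat.card H.ConnectedComponent + 1 := Finite.card_option

private lemma myCC_card_lt_deleteEdges [Finite V] {H : SimpleGraph V} {u v : V}
    (h : H.Adj u v) (hb : ¬ (H.deleteEdges {s(u, v)}).Reachable u v) :
    Nat.card H.ConnectedComponent <
      Nat.card (H.deleteEdges {s(u, v)}).ConnectedComponent := by
  classical
  haveI : Fintype H.ConnectedComponent := Fintype.ofFinite _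
  haveI : Fintype (H.deleteEdges {s(u, v)}).ConnectedComponent := Fintype.ofFinite _
  rw [Nat.card_eq_fintype_card, Nat.card_eq_fintype_card]
  refine Fintype.card_lt_of_surjective_not_injective (myPhi {s(u, v)}) ?_ ?_
  · intro c
    obtain ⟨x, rfl⟩ := c.exists_rep
    exact ⟨(H.deleteEdges {s(u, v)}).connectedComponentMk x, rfl⟩
  · intro hinj
    have h1 : myPhi (H := H) {s(u, v)} ((H.deleteEdges {s(u, v)}).connectedComponentMk u) =
        myPhi {s(u, v)} ((H.deleteEdges {s(u, v)}).connectedComponentMk v) :=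
      ConnectedComponent.sound h.reachable
    exact hb (ConnectedComponent.exact (hinj h1))

private lemma myForest_bound [Fintype V] :
    ∀ (n : ℕ) (H : SimpleGraph V), H.edgeSet.ncard = n → H.IsAcyclic →
      n + Nat.card H.ConnectedComponent ≤ Fintype.card V := by
  intro n
  induction n with
  | zero =>
    intro H _ _
    simpa using Nat.card_le_card_of_surjective H.connectedComponentMk (fun c => c.exists_rep)
  | succ n ih =>
    intro H hcard hac
    have hne : H.edgeSet.Nonempty := by
      rw [Set.nonempty_iff_ne_empty]
      intro h
      rw [h] at hcard
      simp at hcard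
    obtain ⟨e, he⟩ := hne
    induction e with
    | h u v =>
      have hadj : H.Adj u v := he
      set H' := H.deleteEdges {s(u, v)} with hH'
      have hcard' : H'.edgeSet.ncard = n := by
        rw [hH', SimpleGraph.edgeSet_deleteEdges]
        rw [Set.ncard_diff_singleton_of_mem he, hcard]
        omega
      have hac' : H'.IsAcyclic := myAcyclic_of_le (SimpleGraph.deleteEdges_le _) hac
      have hbridge : ¬ (H.deleteEdges {s(u, v)}).Reachable u v := by
        have := (isAcyclic_iff_forall_adj_isBridge.mp hac) hadj
        exact this
      have hlt := myCC_card_lt_deleteEdges hadj hbridge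
      rw [← hH'] at hlt
      have := ih H' hcard' hac'
      omega

private lemma myGeneral_bound [Fintype V] :
    ∀ (n : ℕ) (H : SimpleGraph V), H.edgeSet.ncard = n →
      Fintype.card V ≤ n + Nat.card H.ConnectedComponent := by
  intro n
  induction n with
  | zero =>
    intro H hcard
    have hbot : H = ⊥ := by
      rw [← SimpleGraph.edgeSet_eq_empty]
      exact (Set.ncard_eq_zero (Set.toFinite _)).mp hcard
    subst hbot
    have hinj : Function.Injective (⊥ : SimpleGraph V).connectedComponentMk := by
      intro a b h
      have := ConnectedComponent.exact h
      rwa [SimpleGraph.reachable_bot] at this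
    simpa using Nat.card_le_card_of_injective _ hinj
  | succ n ih =>
    intro H hcard
    have hne : H.edgeSet.Nonempty := by
      rw [Set.nonempty_iff_ne_empty]
      intro h
      rw [h] at hcard
      simp at hcard
    obtain ⟨e, he⟩ := hne
    induction e with
    | h u v =>
      set H' := H.deleteEdges {s(u, v)} with hH'
      have hcard' : H'.edgeSet.ncard = n := by
        rw [hH', SimpleGraph.edgeSet_deleteEdges]
        rw [Set.ncard_diff_singleton_of_mem he, hcard]
        omega
      have hle := myCC_card_deleteEdges_le (H := H) u v
      rw [← hH'] at hle
      have := ih H' hcard'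
      omega

private lemma myReachable_mono {G₁ G₂ : SimpleGraph V}
    (h : ∀ a b, G₁.Adj a b → G₂.Reachable a b) {x y : V} (hr : G₁.Reachable x y) :
    G₂.Reachable x y := by
  obtain ⟨p⟩ := hr
  induction p with
  | nil => exact Reachable.refl _
  | cons hab _ ih => exact (h _ _ hab).trans ih

end Aux

/-- If `S` and `I` are acyclic edge sets (forests) of a finite simple graph `G`, then the
number of edges of `I` whose endpoints lie in the same connected component of the spanning
subgraph `(V(G), S)` is at most `|S|`. -/
theorem forest_connected_edges_bound {V : Type*} [Fintype V] (G : SimpleGraph V)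
    (S I : Finset (Sym2 V))
    (hS : ↑S ⊆ G.edgeSet) (hI : ↑I ⊆ G.edgeSet)
    (hSac : (SimpleGraph.fromEdgeSet (↑S : Set (Sym2 V))).IsAcyclic)
    (hIac : (SimpleGraph.fromEdgeSet (↑I : Set (Sym2 V))).IsAcyclic) :
    {e ∈ (I : Set (Sym2 V)) |
        ∃ u v : V, e = s(u, v) ∧
          (SimpleGraph.fromEdgeSet (↑S : Set (Sym2 V))).Reachable u v}.ncard ≤ S.card := by
  classical
  set HS := SimpleGraph.fromEdgeSet (↑S : Set (Sym2 V)) with hHS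
  set T : Finset (Sym2 V) :=
    I.filter (fun e => ∃ u v : V, e = s(u, v) ∧ HS.Reachable u v) with hT
  have hset : {e ∈ (I : Set (Sym2 V)) |
      ∃ u v : V, e = s(u, v) ∧ HS.Reachable u v} = (↑T : Set (Sym2 V)) := by
    ext e
    simp [hT]
  rw [hset, Set.ncard_coe_finset]
  set HT := SimpleGraph.fromEdgeSet (↑T : Set (Sym2 V)) with hHT
  have hTsub : (↑T : Set (Sym2 V)) ⊆ (↑I : Set (Sym2 V)) := by
    intro e he
    exact Finset.mem_coe.mpr (Finset.mem_of_mem_filter _ (Finset.mem_coe.mp he))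
  have hTac : HT.IsAcyclic := myAcyclic_of_le (SimpleGraph.fromEdgeSet_mono hTsub) hIac
  -- edge counts
  have hTedges : HT.edgeSet.ncard = T.card := by
    rw [hHT, SimpleGraph.edgeSet_fromEdgeSet]
    have hdiff : (↑T : Set (Sym2 V)) \ Sym2.diagSet = ↑T := by
      ext e
      exact ⟨fun h => h.1, fun h => ⟨h, G.not_isDiag_of_mem_edgeSet (hI (hTsub h))⟩⟩
    rw [hdiff, Set.ncard_coe_finset]
  have hSedges : HS.edgeSet.ncard = S.card := by
    rw [hHS, SimpleGraph.edgeSet_fromEdgeSet]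
    have hdiff : (↑S : Set (Sym2 V)) \ Sym2.diagSet = ↑S := by
      ext e
      exact ⟨fun h => h.1, fun h => ⟨h, G.not_isDiag_of_mem_edgeSet (hS h)⟩⟩
    rw [hdiff, Set.ncard_coe_finset]
  -- adjacency in HT implies reachability in HS
  have hadjreach : ∀ a b : V, HT.Adj a b → HS.Reachable a b := by
    intro a b hab
    rw [hHT, SimpleGraph.fromEdgeSet_adj] at hab
    obtain ⟨hmem, _⟩ := hab
    obtain ⟨u, v, hequv, hruv⟩ := (Finset.mem_filter.mp (Finset.mem_coe.mp hmem)).2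
    rw [Sym2.eq_iff] at hequv
    rcases hequv with ⟨rfl, rfl⟩ | ⟨rfl, rfl⟩
    · exact hruv
    · exact hruv.symm
  -- surjection from components of HT to components of HS
  let ψ : HT.ConnectedComponent → HS.ConnectedComponent :=
    ConnectedComponent.lift (fun w => HS.connectedComponentMk w)
      (fun a b p _ => ConnectedComponent.sound (myReachable_mono hadjreach p.reachable))
  have hψsurj : Function.Surjective ψ := by
    intro c
    obtain ⟨x, rfl⟩ := c.exists_rep
    exact ⟨HT.connectedComponentMk x, rfl⟩
  have hccle : Nat.card HS.ConnectedComponent ≤ Nat.card HT.ConnectedComponent :=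
    Nat.card_le_card_of_surjective ψ hψsurj
  have h1 := myForest_bound T.card HT hTedges hTac
  have h2 := myGeneral_bound S.card HS hSedges
  omega
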